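/- arXiv:1905.07811 — 2 statements merged into one kernel-verified Lean document; each statement's English description precedes it below -/
import Mathlib

section
/- There exists R₀ > 0 (depending only on c and N) such that if R ≥ R₀, then for every integer k ≥ 1, f has no zeros on the annulus B_k = {z : 4R_k ≤ |z| ≤ R_{k+1}/4}. -/
open Complex

noncomputable section

/-- `f₀(z) = z² + c` iterated `N` times. -/
def f0iter (c : ℂ) (N : ℕ) (z : ℂ) : ℂ := (fun w => w ^ 2 + c)^[N] z

/-- `n_k = 2^(N + k - 1)`. -/
def nseq (N k : ℕ) : ℕ := 2 ^ (N + k - 1)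

/-- The radii `R_k`: `R₁ = 2R`, `R_{k+1} = max {|f_k(z)| : |z| = 2 R_k}` where
`f_k(z) = f₀^N(z) · ∏_{j=1}^k (1 - (1/2)(z/R_j)^{n_j})`. -/
def Rseq (c : ℂ) (N : ℕ) (R : ℝ) : ℕ → ℝ
  | 0 => R
  | 1 => 2 * R
  | k + 2 =>
      sSup ((fun z => ‖f0iter c N z *
        ∏ j ∈ (Finset.Icc 1 (k + 1)).attach,
          (1 - (1 / 2) * (z / ((Rseq c N R j.1 : ℝ) : ℂ)) ^ nseq N j.1)‖) ''
        Metric.sphere (0 : ℂ) (2 * Rseq c N R (k + 1)))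
  decreasing_by
  · have := j.2; simp only [Finset.mem_Icc] at this; omega
  · omega

/-- `F_k(z) = 1 - (1/2)(z/R_k)^{n_k}`. -/
def Fseq (c : ℂ) (N : ℕ) (R : ℝ) (k : ℕ) (z : ℂ) : ℂ :=
  1 - (1 / 2) * (z / ((Rseq c N R k : ℝ) : ℂ)) ^ nseq N k

/-- The partial product `f_k(z) = f₀^N(z) · ∏_{j=1}^k F_j(z)`. -/
def fseq (c : ℂ) (N : ℕ) (R : ℝ) (k : ℕ) (z : ℂ) : ℂ :=
  f0iter c N z * ∏ j ∈ Finset.Icc 1 k, Fseq c N R j z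

/-- The infinite product `f(z) = f₀^N(z) · ∏_{k=1}^∞ F_k(z)`. -/
def flim (c : ℂ) (N : ℕ) (R : ℝ) (z : ℂ) : ℂ :=
  f0iter c N z * ∏' k : ℕ, Fseq c N R (k + 1) z

/-- The standing assumption `1/2 ≤ |f₀^N(z)|/|z|^{2^N} ≤ 2` for `|z| ≥ R`. -/
def OneBound (c : ℂ) (N : ℕ) (R : ℝ) : Prop :=
  ∀ z : ℂ, R ≤ ‖z‖ →
    1 / 2 ≤ ‖f0iter c N z‖ / ‖z‖ ^ 2 ^ N ∧
    ‖f0iter c N z‖ / ‖z‖ ^ 2 ^ N ≤ 2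

/-- `C₁ = R₁^{n₁}/2`, and for `k ≥ 2`,
`C_k = (-1)^{k-1} 2^{-k} R_k^{n_k} ∏_{j=1}^{k-1} R_j^{-n_j}`. -/
def Cseq (c : ℂ) (N : ℕ) (R : ℝ) (k : ℕ) : ℝ :=
  (-1) ^ (k - 1) * Rseq c N R k ^ nseq N k /
    (2 ^ k * ∏ j ∈ Finset.Icc 1 (k - 1), Rseq c N R j ^ nseq N j)

/-! ### Auxiliary lemmas -/

lemma Rseq_succ_succ (c : ℂ) (N : ℕ) (R : ℝ) (k : ℕ) :
    Rseq c N R (k + 2) = sSup ((fun z => ‖fseq c N R (k+1) z‖) ''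
      Metric.sphere (0 : ℂ) (2 * Rseq c N R (k + 1))) := by
  rw [Rseq]
  have h : (fun z => ‖f0iter c N z *
        ∏ j ∈ (Finset.Icc 1 (k + 1)).attach,
          (1 - (1 / 2) * (z / ((Rseq c N R j.1 : ℝ) : ℂ)) ^ nseq N j.1)‖)
      = (fun z => ‖fseq c N R (k+1) z‖) := by
    funext z
    simp only [fseq, Fseq]
    rw [Finset.prod_attach (Finset.Icc 1 (k+1))
      (fun j => 1 - (1 / 2) * (z / ((Rseq c N R j : ℝ) : ℂ)) ^ nseq N j)]
  rw [h]

lemma cont_f0 (c : ℂ) (N : ℕ) : Continuous (f0iter c N) := by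
  unfold f0iter
  exact Continuous.iterate (by continuity) N

lemma cont_fseq (c : ℂ) (N : ℕ) (R : ℝ) (m : ℕ) : Continuous (fseq c N R m) := by
  unfold fseq Fseq
  exact (cont_f0 c N).mul (continuous_finset_prod _ fun j _ => by continuity)

lemma abs_term (c : ℂ) (N : ℕ) (R : ℝ) (j : ℕ) (hR : 0 < Rseq c N R j) (z : ℂ) :
    ‖(1 / 2) * (z / ((Rseq c N R j : ℝ) : ℂ)) ^ nseq N j‖
      = (1 / 2) * (‖z‖ / Rseq c N R j) ^ nseq N j := by
  simp [norm_mul, norm_pow, norm_div, Complex.norm_real, Real.norm_eq_abs, abs_of_pos hR]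

lemma abs_Fseq_ge (c : ℂ) (N : ℕ) (R : ℝ) (j : ℕ) (z : ℂ) :
    ‖(1 / 2) * (z / ((Rseq c N R j : ℝ) : ℂ)) ^ nseq N j‖ - 1
      ≤ ‖Fseq c N R j z‖ := by
  have h := norm_sub_norm_le ((1 / 2) * (z / ((Rseq c N R j : ℝ) : ℂ)) ^ nseq N j) 1
  simp only [norm_one] at h
  calc _ ≤ ‖(1 / 2) * (z / ((Rseq c N R j : ℝ) : ℂ)) ^ nseq N j - 1‖ := h
    _ = _ := by rw [Fseq, ← norm_neg]; ring_nf

lemma abs_Fseq_le (c : ℂ) (N : ℕ) (R : ℝ) (j : ℕ) (z : ℂ) :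
    1 - ‖(1 / 2) * (z / ((Rseq c N R j : ℝ) : ℂ)) ^ nseq N j‖
      ≤ ‖Fseq c N R j z‖ := by
  have h := norm_sub_norm_le (1 : ℂ) ((1 / 2) * (z / ((Rseq c N R j : ℝ) : ℂ)) ^ nseq N j)
  simp only [norm_one] at h
  exact h

lemma Rsucc_ge (c : ℂ) (N : ℕ) (R : ℝ) (m : ℕ) (hm : 1 ≤ m) (w : ℂ)
    (hw : ‖w‖ = 2 * Rseq c N R m) :
    ‖fseq c N R m w‖ ≤ Rseq c N R (m + 1) := by
  obtain ⟨k, rfl⟩ : ∃ k, m = k + 1 := ⟨m - 1, by omega⟩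
  rw [Rseq_succ_succ]
  apply le_csSup
  · exact ((isCompact_sphere (0 : ℂ) _).image (continuous_norm.comp
      (cont_fseq c N R (k+1)))).bddAbove
  · exact ⟨w, by simpa [mem_sphere_zero_iff_norm] using hw, rfl⟩

lemma Rseq_one (c : ℂ) (N : ℕ) (R : ℝ) : Rseq c N R 1 = 2 * R := by rw [Rseq]

lemma two_le_nseq (N : ℕ) (hN : 10 ≤ N) (j : ℕ) : 2 ≤ nseq N j := by
  have : (2:ℕ)^1 ≤ 2^(N+j-1) := Nat.pow_le_pow_right (by norm_num) (by omega)
  simpa [nseq] using this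

lemma f0_lower (c : ℂ) (N : ℕ) (R : ℝ) (hOB : OneBound c N R) (w : ℂ)
    (hwR : R ≤ ‖w‖) (hwpos : 0 < ‖w‖) :
    (1/2) * ‖w‖ ^ 2^N ≤ ‖f0iter c N w‖ := by
  have hb := (hOB w hwR).1
  have hppos : 0 < ‖w‖ ^ 2^N := pow_pos hwpos _
  calc (1/2) * ‖w‖ ^ 2^N
      ≤ ‖f0iter c N w‖ / ‖w‖ ^ 2^N * ‖w‖ ^ 2^N := by
        apply mul_le_mul_of_nonneg_right hb (le_of_lt hppos)
    _ = ‖f0iter c N w‖ := by field_simp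

lemma step_bound (c : ℂ) (N : ℕ) (R : ℝ) (hN : 10 ≤ N) (hR : 1 ≤ R) (hOB : OneBound c N R)
    (m : ℕ) (hm : 1 ≤ m) (h2 : 2 ≤ Rseq c N R m)
    (hmono : ∀ j, 1 ≤ j → j ≤ m → 0 < Rseq c N R j ∧ Rseq c N R j ≤ Rseq c N R m)
    (hRm : R ≤ Rseq c N R m) :
    4 * Rseq c N R m ≤ Rseq c N R (m + 1) := by
  set t := Rseq c N R m with ht
  set w : ℂ := ((2 * t : ℝ) : ℂ) with hwdef
  have hwabs : ‖w‖ = 2 * t := by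
    rw [hwdef, Complex.norm_real, Real.norm_eq_abs]; exact abs_of_pos (by linarith)
  have hfle := Rsucc_ge c N R m hm w hwabs
  have hprod : (1:ℝ) ≤ ∏ j ∈ Finset.Icc 1 m, ‖Fseq c N R j w‖ := by
    calc (1:ℝ) = ∏ _j ∈ Finset.Icc 1 m, (1:ℝ) := by simp
      _ ≤ _ := ?_
    apply Finset.prod_le_prod (fun i _ => zero_le_one)
    intro j hj
    simp only [Finset.mem_Icc] at hj
    obtain ⟨hpos, hle⟩ := hmono j hj.1 hj.2
    have habs := abs_term c N R j hpos w
    have h2le : (2:ℝ) ≤ ‖w‖ / Rseq c N R j := by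
      rw [hwabs, le_div_iff₀ hpos]; linarith
    have hpow : (4:ℝ) ≤ (‖w‖ / Rseq c N R j) ^ nseq N j := by
      calc (4:ℝ) = 2 ^ 2 := by norm_num
        _ ≤ 2 ^ nseq N j := pow_le_pow_right₀ one_le_two (two_le_nseq N hN j)
        _ ≤ _ := pow_le_pow_left₀ (by norm_num) h2le _
    have hge := abs_Fseq_ge c N R j w
    rw [habs] at hge
    linarith
  have hwR : R ≤ ‖w‖ := by rw [hwabs]; linarith
  have hwpos : (0:ℝ) < ‖w‖ := by rw [hwabs]; linarith
  have hf0 := f0_lower c N R hOB w hwR hwpos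
  rw [hwabs] at hf0
  have h3 : 3 ≤ 2^N := by
    calc 3 ≤ 2^2 := by norm_num
      _ ≤ 2^N := Nat.pow_le_pow_right (by norm_num) (by omega)
  have hkey : 4 * t ≤ (1/2) * (2*t)^(2^N) := by
    have h1 : (2*t)^3 ≤ (2*t)^(2^N) := pow_le_pow_right₀ (by linarith) h3
    have hexp : (2*t)^3 = 8*t^3 := by ring
    nlinarith [sq_nonneg t]
  calc 4 * t ≤ (1/2) * (2*t)^(2^N) * 1 := by linarith
    _ ≤ ‖f0iter c N w‖ * ∏ j ∈ Finset.Icc 1 m, ‖Fseq c N R j w‖ :=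
        mul_le_mul hf0 hprod (by norm_num) (norm_nonneg _)
    _ = ‖fseq c N R m w‖ := by rw [fseq, norm_mul, norm_prod]
    _ ≤ Rseq c N R (m + 1) := hfle

lemma chain (c : ℂ) (N : ℕ) (R : ℝ) (hN : 10 ≤ N) (hR : 1 ≤ R) (hOB : OneBound c N R) :
    ∀ m, 1 ≤ m → 2 ≤ Rseq c N R m ∧ 4 * Rseq c N R m ≤ Rseq c N R (m + 1) := by
  have key : ∀ M m, 1 ≤ m → m ≤ M →
      2 ≤ Rseq c N R m ∧ 4 * Rseq c N R m ≤ Rseq c N R (m + 1) := by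
    intro M
    induction M with
    | zero => intro m h1 h0; omega
    | succ M ih =>
      intro m h1 hle
      rcases Nat.lt_or_ge m (M + 1) with h | h
      · exact ih m h1 (by omega)
      · have hm : m = M + 1 := by omega
        subst hm
        have h2 : 2 ≤ Rseq c N R (M + 1) := by
          rcases Nat.eq_zero_or_pos M with h0 | h0
          · subst h0; rw [Rseq_one]; linarith
          · have hMstep := ih M h0 le_rfl
            linarith [hMstep.1, hMstep.2]
        have hmono : ∀ i, 1 ≤ i → ∀ j, i ≤ j → j ≤ M + 1 →
            Rseq c N R i ≤ Rseq c N R j := by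
          intro i hi j
          induction j with
          | zero => intro hij _; exact absurd (hi.trans hij) (by norm_num)
          | succ j ihj =>
            intro hij hjM
            rcases Nat.lt_or_ge i (j + 1) with hlt | hge
            · have hstep := ih j (by omega) (by omega)
              have hle2 := ihj (by omega) (by omega)
              linarith [hstep.1, hstep.2]
            · have hij' : i = j + 1 := by omega
              rw [hij']
        refine ⟨h2, ?_⟩
        apply step_bound c N R hN hR hOB (M + 1) (by omega) h2
        · intro j hj1 hj2
          have hmj := hmono j hj1 (M + 1) hj2 le_rfl
          have h2j : 2 ≤ Rseq c N R j := by
            rcases Nat.lt_or_ge j (M + 1) with hlt | hge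
            · exact (ih j hj1 (by omega)).1
            · have hjj : j = M + 1 := by omega
              rw [hjj]; exact h2
          exact ⟨by linarith, hmj⟩
        · have h1R := hmono 1 le_rfl (M + 1) (by omega) le_rfl
          rw [Rseq_one] at h1R
          linarith
  intro m h1
  exact key m m h1 le_rfl

lemma Rseq_mono (c : ℂ) (N : ℕ) (R : ℝ) (hN : 10 ≤ N) (hR : 1 ≤ R) (hOB : OneBound c N R) :
    ∀ i, 1 ≤ i → ∀ j, i ≤ j → Rseq c N R i ≤ Rseq c N R j := by
  intro i hi j
  induction j with
  | zero => intro hij; exact absurd (hi.trans hij) (by norm_num)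
  | succ j ihj =>
    intro hij
    rcases Nat.lt_or_ge i (j + 1) with hlt | hge
    · have hstep := chain c N R hN hR hOB j (by omega)
      have hle2 := ihj (by omega)
      linarith [hstep.1, hstep.2]
    · have hij' : i = j + 1 := by omega
      rw [hij']

/-- There is `R₀ > 0` (depending only on `c`, `N`) such that for `R ≥ R₀` and every
`k ≥ 1`, `f` has no zeros on `B_k = {z : 4R_k ≤ |z| ≤ R_{k+1}/4}`. -/
theorem stmt10 (c : ℂ) (N : ℕ) (hN : 10 ≤ N) :
    ∃ R₀ : ℝ, 0 < R₀ ∧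
      ∀ R : ℝ, R₀ ≤ R → OneBound c N R →
        ∀ k : ℕ, 1 ≤ k → ∀ z : ℂ,
          4 * Rseq c N R k ≤ ‖z‖ → ‖z‖ ≤ Rseq c N R (k + 1) / 4 →
          flim c N R z ≠ 0 := by
  refine ⟨1, one_pos, ?_⟩
  intro R hR hOB k hk z hz1 hz2
  have hchain := chain c N R hN hR hOB
  have hmono := Rseq_mono c N R hN hR hOB
  have hk2 : 2 ≤ Rseq c N R k := (hchain k hk).1
  have hzpos : 0 < ‖z‖ := by linarith
  have hzR : R ≤ ‖z‖ := by
    have h1k := hmono 1 le_rfl k hk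
    rw [Rseq_one] at h1k
    linarith
  have hf0pos : 0 < ‖f0iter c N z‖ := by
    have hl := f0_lower c N R hOB z hzR hzpos
    have hp : 0 < ‖z‖ ^ 2^N := pow_pos hzpos _
    linarith
  have hf0ne : f0iter c N z ≠ 0 := by
    intro h; rw [h] at hf0pos; simp at hf0pos
  set g : ℕ → ℂ := fun j => Fseq c N R (j+1) z with hg
  have hrho : ∀ j : ℕ, 0 < Rseq c N R (j+1) := fun j => by
    have := (hchain (j+1) (by omega)).1; linarith
  have habs : ∀ j : ℕ, ‖(1/2) * (z / ((Rseq c N R (j+1) : ℝ):ℂ)) ^ nseq N (j+1)‖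
      = (1/2) * (‖z‖ / Rseq c N R (j+1)) ^ nseq N (j+1) :=
    fun j => abs_term c N R (j+1) (hrho j) z
  -- bound for large indices
  have hsmall : ∀ j : ℕ, k ≤ j →
      ‖(1/2) * (z / ((Rseq c N R (j+1) : ℝ):ℂ)) ^ nseq N (j+1)‖ ≤ (1/4)^(j+1) ∧
      ‖(1/2) * (z / ((Rseq c N R (j+1) : ℝ):ℂ)) ^ nseq N (j+1)‖ ≤ 1/2 := by
    intro j hj
    rw [habs j]
    have hle : ‖z‖ / Rseq c N R (j+1) ≤ 1/4 := by
      have hm := hmono (k+1) (by omega) (j+1) (by omega)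
      rw [div_le_iff₀ (hrho j)]
      linarith
    have hnn : 0 ≤ ‖z‖ / Rseq c N R (j+1) :=
      div_nonneg (norm_nonneg _) (le_of_lt (hrho j))
    have hp1 : (‖z‖ / Rseq c N R (j+1)) ^ nseq N (j+1) ≤ (1/4:ℝ) ^ nseq N (j+1) :=
      pow_le_pow_left₀ hnn hle _
    have hnj : j + 1 ≤ nseq N (j+1) := by
      have h2p : N + j < 2 ^ (N + j) := Nat.lt_two_pow_self
      have heq : nseq N (j+1) = 2 ^ (N + j) := by
        have : N + (j + 1) - 1 = N + j := by omega
        rw [nseq, this]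
      omega
    have hp2 : ((1:ℝ)/4) ^ nseq N (j+1) ≤ (1/4) ^ (j+1) :=
      pow_le_pow_of_le_one (by norm_num) (by norm_num) hnj
    have hp3 : ((1:ℝ)/4) ^ (j+1) ≤ 1 := pow_le_one₀ (by norm_num) (by norm_num)
    constructor <;> nlinarith [pow_nonneg hnn (nseq N (j+1))]
  -- lower bound on |g j|
  have hglb : ∀ j : ℕ, (1:ℝ)/2 ≤ ‖g j‖ := by
    intro j
    rcases Nat.lt_or_ge j k with hjk | hjk
    · have hge := abs_Fseq_ge c N R (j+1) z
      rw [habs j] at hge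
      have h4 : (4:ℝ) ≤ ‖z‖ / Rseq c N R (j+1) := by
        have hm := hmono (j+1) (by omega) k (by omega)
        rw [le_div_iff₀ (hrho j)]
        linarith
      have hn1 : 1 ≤ nseq N (j+1) := by have := two_le_nseq N hN (j+1); omega
      have hp : (4:ℝ) ≤ (‖z‖ / Rseq c N R (j+1)) ^ nseq N (j+1) := by
        calc (4:ℝ) = 4^1 := by norm_num
          _ ≤ 4 ^ nseq N (j+1) := pow_le_pow_right₀ (by norm_num) hn1
          _ ≤ _ := pow_le_pow_left₀ (by norm_num) h4 _
      have : (1:ℝ) ≤ ‖Fseq c N R (j+1) z‖ := by linarith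
      simpa [hg] using le_trans (by norm_num) this
    · have hle := abs_Fseq_le c N R (j+1) z
      have hb := (hsmall j hjk).2
      have : (1:ℝ)/2 ≤ ‖Fseq c N R (j+1) z‖ := by linarith
      simpa [hg] using this
  have hgne : ∀ j : ℕ, g j ≠ 0 := by
    intro j hzero
    have := hglb j
    rw [hzero] at this
    norm_num at this
  -- summability of logs
  have hlog : Summable (fun j => Complex.log (g j)) := by
    rw [← summable_nat_add_iff k]
    apply Summable.of_norm_bounded (g := fun j => (3/2) * (1/4:ℝ)^j)
      ((summable_geometric_of_lt_one (by norm_num) (by norm_num)).mul_left _)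
    intro j
    set u : ℂ := -((1/2) * (z / ((Rseq c N R (j+k+1) : ℝ):ℂ)) ^ nseq N (j+k+1)) with hu
    have hgu : g (j+k) = 1 + u := by
      rw [hg]; simp only [Fseq, hu]; ring
    have hnu : ‖u‖ = ‖(1/2) * (z / ((Rseq c N R (j+k+1) : ℝ):ℂ)) ^ nseq N (j+k+1)‖ := by
      rw [hu, norm_neg]
    have hbs := hsmall (j+k) (by omega)
    have hu2 : ‖u‖ ≤ 1/2 := by rw [hnu]; exact hbs.2
    have hu1 : ‖u‖ ≤ (1/4:ℝ)^(j+k+1) := by rw [hnu]; exact hbs.1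
    have hlb := Complex.norm_log_one_add_half_le_self hu2
    have hmono4 : ((1:ℝ)/4)^(j+k+1) ≤ (1/4)^j :=
      pow_le_pow_of_le_one (by norm_num) (by norm_num) (by omega)
    calc ‖Complex.log (g (j+k))‖ = ‖Complex.log (1 + u)‖ := by rw [hgu]
      _ ≤ 3/2 * ‖u‖ := hlb
      _ ≤ (3/2) * (1/4:ℝ)^j := by nlinarith [norm_nonneg u]
  -- the infinite product is nonzero
  have heq := Complex.cexp_tsum_eq_tprod (f := g) hgne hlog
  have htp : (∏' j : ℕ, g j) ≠ 0 := by
    rw [← heq]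
    exact Complex.exp_ne_zero _
  have hf : flim c N R z = f0iter c N z * ∏' j : ℕ, g j := rfl
  rw [hf]
  exact mul_ne_zero hf0ne htp

end
end

section
/- There exists R₀ > 0 (depending only on c and N) such that if R ≥ R₀, then for every integer k ≥ 1: 1/8 ≤ R_{k+1}/(|C_k|·2^{2n_k}) ≤ 8. -/
open Complex

noncomputable section

/-! ### Auxiliary lemmas -/

lemma sum_half_pow' (k : ℕ) : ∑ j ∈ Finset.Icc 1 k, ((1:ℝ)/2)^(j+1) = 1/2 - (1/2)^(k+1) := by
  induction k with
  | zero => simp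
  | succ n ih => rw [Finset.sum_Icc_succ_top (by omega), ih]; ring

lemma prod_one_sub_ge' (k : ℕ) (δ : ℕ → ℝ) (h0 : ∀ j ∈ Finset.Icc 1 k, 0 ≤ δ j)
    (h1 : ∀ j ∈ Finset.Icc 1 k, δ j ≤ 1) :
    1 - ∑ j ∈ Finset.Icc 1 k, δ j ≤ ∏ j ∈ Finset.Icc 1 k, (1 - δ j) := by
  induction k with
  | zero => simp
  | succ n ih =>
    rw [Finset.sum_Icc_succ_top (by omega), Finset.prod_Icc_succ_top (by omega)]
    have h0' : ∀ j ∈ Finset.Icc 1 n, 0 ≤ δ j := fun j hj => h0 j (by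
      simp only [Finset.mem_Icc] at hj ⊢; omega)
    have h1' : ∀ j ∈ Finset.Icc 1 n, δ j ≤ 1 := fun j hj => h1 j (by
      simp only [Finset.mem_Icc] at hj ⊢; omega)
    have ihn := ih h0' h1'
    have hd0 : 0 ≤ δ (n+1) := h0 _ (by simp)
    have hd1 : δ (n+1) ≤ 1 := h1 _ (by simp)
    nlinarith [Finset.sum_nonneg h0']

lemma half_le_prods' (k : ℕ) (δ : ℕ → ℝ) (h0 : ∀ j ∈ Finset.Icc 1 k, 0 ≤ δ j)
    (hb : ∀ j ∈ Finset.Icc 1 k, δ j ≤ (1/2)^(j+1)) :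
    (1/2 : ℝ) ≤ ∏ j ∈ Finset.Icc 1 k, (1 - δ j) ∧
    ∏ j ∈ Finset.Icc 1 k, (1 + δ j) ≤ 2 := by
  have h1 : ∀ j ∈ Finset.Icc 1 k, δ j ≤ 1 := fun j hj =>
    (hb j hj).trans (by
      calc ((1:ℝ)/2)^(j+1) ≤ 1^(j+1) := pow_le_pow_left₀ (by norm_num) (by norm_num) _
      _ = 1 := one_pow _)
  have hsum : ∑ j ∈ Finset.Icc 1 k, δ j ≤ 1/2 := by
    calc ∑ j ∈ Finset.Icc 1 k, δ j ≤ ∑ j ∈ Finset.Icc 1 k, ((1:ℝ)/2)^(j+1) :=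
          Finset.sum_le_sum hb
    _ = 1/2 - (1/2)^(k+1) := sum_half_pow' k
    _ ≤ 1/2 := by nlinarith [pow_pos (by norm_num : (0:ℝ) < 1/2) (k+1)]
  have hlow : (1/2 : ℝ) ≤ ∏ j ∈ Finset.Icc 1 k, (1 - δ j) := by
    have := prod_one_sub_ge' k δ h0 h1
    linarith
  refine ⟨hlow, ?_⟩
  have hprodsq : ∏ j ∈ Finset.Icc 1 k, (1 + δ j) * (1 - δ j) ≤ 1 := by
    apply Finset.prod_le_one
    · intro j hj; nlinarith [h0 j hj, h1 j hj]
    · intro j hj; nlinarith [h0 j hj, h1 j hj]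
  rw [Finset.prod_mul_distrib] at hprodsq
  have hpos : (0:ℝ) < ∏ j ∈ Finset.Icc 1 k, (1 - δ j) := by linarith
  nlinarith [Finset.prod_nonneg (fun j hj => by nlinarith [h0 j hj] :
    ∀ j ∈ Finset.Icc 1 k, (0:ℝ) ≤ 1 + δ j)]

lemma sum_nseq (N k : ℕ) (hk : 1 ≤ k) :
    2^N + ∑ j ∈ Finset.Icc 1 k, nseq N j = 2^(N+k) := by
  induction k with
  | zero => omega
  | succ n ih =>
    rcases Nat.eq_or_lt_of_le hk with h | h
    · simp [← h, nseq]; ring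
    · have hn : 1 ≤ n := by omega
      rw [Finset.sum_Icc_succ_top (by omega), ← add_assoc, ih hn]
      have : nseq N (n+1) = 2^(N+n) := by simp [nseq]
      rw [this, show N + (n+1) = (N+n)+1 from rfl, pow_succ]; ring

/-- The target quantity `M_k`. -/
def Mval (c : ℂ) (N : ℕ) (R : ℝ) (k : ℕ) : ℝ :=
  (2 * Rseq c N R k) ^ 2^N *
    ∏ j ∈ Finset.Icc 1 k, ((1/2) * (2 * Rseq c N R k / Rseq c N R j) ^ nseq N j)

lemma Rseq_succ_eq (c : ℂ) (N : ℕ) (R : ℝ) (k : ℕ) (hk : 1 ≤ k) :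
    Rseq c N R (k + 1) = sSup ((fun z => ‖fseq c N R k z‖) ''
      Metric.sphere (0 : ℂ) (2 * Rseq c N R k)) := by
  obtain ⟨m, rfl⟩ : ∃ m, k = m + 1 := ⟨k - 1, by omega⟩
  rw [show m + 1 + 1 = m + 2 from rfl, Rseq]
  have : (fun z => ‖f0iter c N z *
        ∏ j ∈ (Finset.Icc 1 (m + 1)).attach,
          (1 - (1 / 2) * (z / ((Rseq c N R j.1 : ℝ) : ℂ)) ^ nseq N j.1)‖)
      = fun z => ‖fseq c N R (m+1) z‖ := by
    funext z
    simp only [fseq, Fseq]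
    rw [Finset.prod_attach (Finset.Icc 1 (m+1))
      (fun j => (1 - (1 / 2) * (z / ((Rseq c N R j : ℝ) : ℂ)) ^ nseq N j))]
  rw [this]

lemma fseq_continuous (c : ℂ) (N : ℕ) (R : ℝ) (k : ℕ) :
    Continuous (fun z => ‖fseq c N R k z‖) := by
  apply Continuous.norm
  apply Continuous.mul
  · exact (continuous_id.pow 2 |>.add continuous_const).iterate N
  · apply continuous_finset_prod
    intro j _
    exact continuous_const.sub ((continuous_const.mul ((continuous_id.div_const _).pow _)))

lemma pointwise_bound (c : ℂ) (N : ℕ) (R : ℝ) (hN : 10 ≤ N) (hR : 1 ≤ R)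
    (hOB : OneBound c N R) (k : ℕ) (hk : 1 ≤ k)
    (hRj : ∀ j ∈ Finset.Icc 1 k, R ≤ Rseq c N R j ∧ Rseq c N R j ≤ Rseq c N R k)
    (z : ℂ) (hz : ‖z‖ = 2 * Rseq c N R k) :
    Mval c N R k / 4 ≤ ‖fseq c N R k z‖ ∧
    ‖fseq c N R k z‖ ≤ 4 * Mval c N R k := by
  set Rk := Rseq c N R k with hRkdef
  have hkmem : k ∈ Finset.Icc 1 k := by simp [hk]
  have hRk : R ≤ Rk := (hRj k hkmem).1
  have hRkpos : (0:ℝ) < Rk := by linarith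
  have hzR : R ≤ ‖z‖ := by rw [hz]; linarith
  obtain ⟨hlo, hhi⟩ := hOB z hzR
  have hzpos : (0:ℝ) < ‖z‖ := by linarith
  have hPpos : (0:ℝ) < ‖z‖ ^ 2^N := pow_pos hzpos _
  have hA1 : (1/2) * (‖z‖ ^ 2^N) ≤ ‖f0iter c N z‖ :=
    (le_div_iff₀ hPpos).mp hlo
  have hA2 : ‖f0iter c N z‖ ≤ 2 * (‖z‖ ^ 2^N) := by
    have := (div_le_iff₀ hPpos).mp hhi; linarith
  set a : ℕ → ℝ := fun j => (1/2) * (2 * Rk / Rseq c N R j) ^ nseq N j with ha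
  set δ : ℕ → ℝ := fun j => (1/2:ℝ) ^ (nseq N j - 1) with hδ
  have key : ∀ j ∈ Finset.Icc 1 k,
      a j * (1 - δ j) ≤ ‖Fseq c N R j z‖ ∧
      ‖Fseq c N R j z‖ ≤ a j * (1 + δ j) := by
    intro j hj
    have hRjlo : R ≤ Rseq c N R j := (hRj j hj).1
    have hRjhi : Rseq c N R j ≤ Rk := (hRj j hj).2
    have hRjpos : (0:ℝ) < Rseq c N R j := by linarith
    have ht2 : (2:ℝ) ≤ 2 * Rk / Rseq c N R j := by
      rw [le_div_iff₀ hRjpos]; linarith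
    have hnj : 1 ≤ nseq N j := Nat.one_le_two_pow
    have habsw : ‖(1/2 : ℂ) * (z / ((Rseq c N R j : ℝ) : ℂ)) ^ nseq N j‖ = a j := by
      rw [norm_mul, norm_pow, norm_div, norm_div, Complex.norm_real, Real.norm_eq_abs, abs_of_pos hRjpos, hz]
      norm_num
      rfl
    have haδ : 1 ≤ a j * δ j := by
      have heq : a j * δ j = ((2 * Rk / Rseq c N R j) / 2) ^ nseq N j := by
        calc a j * δ j
            = (2 * Rk / Rseq c N R j) ^ nseq N j * ((1/2:ℝ)^(nseq N j - 1) * (1/2)) := by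
              rw [ha, hδ]; ring
          _ = (2 * Rk / Rseq c N R j) ^ nseq N j * (1/2:ℝ)^(nseq N j) := by
              rw [← pow_succ]; congr 2; omega
          _ = ((2 * Rk / Rseq c N R j) / 2) ^ nseq N j := by
              simp only [div_pow, one_pow]; ring
      rw [heq]
      exact one_le_pow₀ (by linarith)
    have hδ1 : δ j ≤ 1 := by
      rw [hδ]
      exact pow_le_one₀ (by norm_num) (by norm_num)
    have hapos : 0 ≤ a j := by
      rw [ha]; positivity
    have hup : ‖Fseq c N R j z‖ ≤ a j + 1 := by
      rw [Fseq]
      calc ‖1 - (1/2 : ℂ) * (z / ((Rseq c N R j : ℝ) : ℂ)) ^ nseq N j‖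
          ≤ ‖(1:ℂ)‖ + ‖(1/2 : ℂ) * (z / ((Rseq c N R j : ℝ) : ℂ)) ^ nseq N j‖ := norm_sub_le _ _
        _ = a j + 1 := by rw [habsw, norm_one]; ring
    have hdown : a j - 1 ≤ ‖Fseq c N R j z‖ := by
      rw [Fseq]
      have h1 := norm_sub_norm_le ((1/2 : ℂ) * (z / ((Rseq c N R j : ℝ) : ℂ)) ^ nseq N j) 1
      rw [norm_sub_rev] at h1
      rw [habsw] at h1
      simpa using h1
    constructor
    · nlinarith
    · nlinarith
  have hδ0 : ∀ j ∈ Finset.Icc 1 k, 0 ≤ δ j := by intro j hj; rw [hδ]; positivity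
  have hδb : ∀ j ∈ Finset.Icc 1 k, δ j ≤ (1/2)^(j+1) := by
    intro j hj
    rw [hδ]
    apply pow_le_pow_of_le_one (by norm_num) (by norm_num)
    have h1 : j + 2 < 2^(j+2) := Nat.lt_two_pow_self
    have h2 : (2:ℕ)^(j+2) ≤ 2^(N+j-1) := Nat.pow_le_pow_right (by norm_num) (by
      simp only [Finset.mem_Icc] at hj; omega)
    simp only [nseq]
    omega
  obtain ⟨hplow, hphigh⟩ := half_le_prods' k δ hδ0 hδb
  have hanonneg : ∀ j ∈ Finset.Icc 1 k, 0 ≤ a j := by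
    intro j hj
    have := (hRj j hj).1
    rw [ha]
    have : (0:ℝ) < Rseq c N R j := by linarith
    positivity
  have hpa : (0:ℝ) ≤ ∏ j ∈ Finset.Icc 1 k, a j := Finset.prod_nonneg hanonneg
  -- bound the product of |Fseq|
  have hBlow : (∏ j ∈ Finset.Icc 1 k, a j) * (1/2) ≤
      ∏ j ∈ Finset.Icc 1 k, ‖Fseq c N R j z‖ := by
    calc (∏ j ∈ Finset.Icc 1 k, a j) * (1/2)
        ≤ (∏ j ∈ Finset.Icc 1 k, a j) * ∏ j ∈ Finset.Icc 1 k, (1 - δ j) := by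
          apply mul_le_mul_of_nonneg_left hplow hpa
      _ = ∏ j ∈ Finset.Icc 1 k, (a j * (1 - δ j)) := (Finset.prod_mul_distrib).symm
      _ ≤ ∏ j ∈ Finset.Icc 1 k, ‖Fseq c N R j z‖ := by
          apply Finset.prod_le_prod
          · intro j hj
            have h1 := (key j hj).1
            have h2 := hanonneg j hj
            have h3 := hδ0 j hj
            nlinarith [hδb j hj, pow_le_one₀ (by norm_num : (0:ℝ) ≤ 1/2) (by norm_num : (1:ℝ)/2 ≤ 1) (n := j+1)]
          · intro j hj; exact (key j hj).1
  have hBhigh : (∏ j ∈ Finset.Icc 1 k, ‖Fseq c N R j z‖) ≤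
      (∏ j ∈ Finset.Icc 1 k, a j) * 2 := by
    calc ∏ j ∈ Finset.Icc 1 k, ‖Fseq c N R j z‖
        ≤ ∏ j ∈ Finset.Icc 1 k, (a j * (1 + δ j)) := by
          apply Finset.prod_le_prod
          · intro j hj; positivity
          · intro j hj; exact (key j hj).2
      _ = (∏ j ∈ Finset.Icc 1 k, a j) * ∏ j ∈ Finset.Icc 1 k, (1 + δ j) :=
          Finset.prod_mul_distrib
      _ ≤ (∏ j ∈ Finset.Icc 1 k, a j) * 2 := mul_le_mul_of_nonneg_left hphigh hpa
  have hfseq : ‖fseq c N R k z‖ =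
      ‖f0iter c N z‖ * ∏ j ∈ Finset.Icc 1 k, ‖Fseq c N R j z‖ := by
    rw [fseq, norm_mul, norm_prod]
  have hMval : Mval c N R k = (‖z‖ ^ 2^N) * ∏ j ∈ Finset.Icc 1 k, a j := by
    rw [Mval, hz, ha]
  have hB0 : (0:ℝ) ≤ ∏ j ∈ Finset.Icc 1 k, ‖Fseq c N R j z‖ :=
    Finset.prod_nonneg (fun j _ => norm_nonneg _)
  have hA0 : (0:ℝ) ≤ ‖f0iter c N z‖ := norm_nonneg _
  rw [hfseq, hMval]
  constructor
  · nlinarith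
  · nlinarith

lemma Rsucc_bounds (c : ℂ) (N : ℕ) (R : ℝ) (hN : 10 ≤ N) (hR : 1 ≤ R)
    (hOB : OneBound c N R) (k : ℕ) (hk : 1 ≤ k)
    (hRj : ∀ j ∈ Finset.Icc 1 k, R ≤ Rseq c N R j ∧ Rseq c N R j ≤ Rseq c N R k) :
    Mval c N R k / 4 ≤ Rseq c N R (k+1) ∧ Rseq c N R (k+1) ≤ 4 * Mval c N R k := by
  have hRkpos : (0:ℝ) < Rseq c N R k := by
    have := (hRj k (by simp [hk])).1; linarith
  rw [Rseq_succ_eq c N R k hk]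
  set S := (fun z => ‖fseq c N R k z‖) '' Metric.sphere (0:ℂ) (2 * Rseq c N R k)
    with hS
  have hcomp : IsCompact S := (isCompact_sphere _ _).image (fseq_continuous c N R k)
  have hbdd : BddAbove S := hcomp.bddAbove
  have hsne : (Metric.sphere (0:ℂ) (2 * Rseq c N R k)).Nonempty :=
    NormedSpace.sphere_nonempty.mpr (by positivity)
  have hne : S.Nonempty := hsne.image _
  constructor
  · have hmem : ((2 * Rseq c N R k : ℝ) : ℂ) ∈ Metric.sphere (0:ℂ) (2 * Rseq c N R k) := by
      rw [mem_sphere_zero_iff_norm, Complex.norm_real, Real.norm_eq_abs]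
      exact abs_of_pos (by positivity)
    have habs : ‖((2 * Rseq c N R k : ℝ) : ℂ)‖ = 2 * Rseq c N R k := by
      rw [Complex.norm_real, Real.norm_eq_abs]; exact abs_of_pos (by positivity)
    have h := (pointwise_bound c N R hN hR hOB k hk hRj _ habs).1
    exact h.trans (le_csSup hbdd ⟨_, hmem, rfl⟩)
  · apply csSup_le hne
    rintro x ⟨z, hzmem, rfl⟩
    have hz : ‖z‖ = 2 * Rseq c N R k := by
      rw [mem_sphere_zero_iff_norm] at hzmem
      exact hzmem
    exact (pointwise_bound c N R hN hR hOB k hk hRj z hz).2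

lemma Mval_ge (c : ℂ) (N : ℕ) (R : ℝ) (hN : 10 ≤ N) (hR : 1 ≤ R) (k : ℕ) (hk : 1 ≤ k)
    (hRj : ∀ j ∈ Finset.Icc 1 k, R ≤ Rseq c N R j ∧ Rseq c N R j ≤ Rseq c N R k) :
    16 * Rseq c N R k ≤ Mval c N R k := by
  have hRkpos : (0:ℝ) < Rseq c N R k := by
    have := (hRj k (by simp [hk])).1; linarith
  have hRk1 : (1:ℝ) ≤ Rseq c N R k := by
    have := (hRj k (by simp [hk])).1; linarith
  have hprod : (1:ℝ) ≤ ∏ j ∈ Finset.Icc 1 k,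
      ((1/2) * (2 * Rseq c N R k / Rseq c N R j) ^ nseq N j) := by
    have hterm : ∀ j ∈ Finset.Icc 1 k,
        (1:ℝ) ≤ (1/2) * (2 * Rseq c N R k / Rseq c N R j) ^ nseq N j := by
      intro j hj
      have hRjpos : (0:ℝ) < Rseq c N R j := by have := (hRj j hj).1; linarith
      have ht : (2:ℝ) ≤ 2 * Rseq c N R k / Rseq c N R j := by
        rw [le_div_iff₀ hRjpos]
        have := (hRj j hj).2; linarith
      have h2 : (2:ℝ) ≤ (2 * Rseq c N R k / Rseq c N R j) ^ nseq N j :=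
        calc (2:ℝ) = 2^1 := (pow_one 2).symm
          _ ≤ (2:ℝ) ^ nseq N j := pow_le_pow_right₀ (by norm_num) Nat.one_le_two_pow
          _ ≤ (2 * Rseq c N R k / Rseq c N R j) ^ nseq N j :=
              pow_le_pow_left₀ (by norm_num) ht _
      linarith
    calc (1:ℝ) = ∏ _j ∈ Finset.Icc 1 k, (1:ℝ) := by simp
      _ ≤ ∏ j ∈ Finset.Icc 1 k, ((1/2) * (2 * Rseq c N R k / Rseq c N R j) ^ nseq N j) :=
          Finset.prod_le_prod (fun j _ => by norm_num) hterm
  have hpow : (16:ℝ) * Rseq c N R k ≤ (2 * Rseq c N R k) ^ 2^N := by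
    have h4 : Rseq c N R k ≤ Rseq c N R k ^ 4 := by
      calc Rseq c N R k = Rseq c N R k ^ 1 := (pow_one _).symm
        _ ≤ Rseq c N R k ^ 4 := pow_le_pow_right₀ hRk1 (by norm_num)
    calc (16:ℝ) * Rseq c N R k ≤ 16 * Rseq c N R k ^ 4 := by linarith
      _ = (2 * Rseq c N R k)^4 := by ring
      _ ≤ (2 * Rseq c N R k) ^ 2^N := by
          apply pow_le_pow_right₀ (by linarith)
          calc 4 ≤ 2^2 := by norm_num
            _ ≤ 2^N := Nat.pow_le_pow_right (by norm_num) (by omega)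
  calc (16:ℝ) * Rseq c N R k ≤ (2 * Rseq c N R k) ^ 2^N := hpow
    _ ≤ Mval c N R k := by
        rw [Mval]
        nlinarith [pow_pos (by linarith : (0:ℝ) < 2 * Rseq c N R k) (2^N)]

lemma good_seq (c : ℂ) (N : ℕ) (R : ℝ) (hN : 10 ≤ N) (hR : 1 ≤ R) (hOB : OneBound c N R) :
    ∀ k, 1 ≤ k → ∀ j ∈ Finset.Icc 1 k, R ≤ Rseq c N R j ∧ Rseq c N R j ≤ Rseq c N R k := by
  intro k
  induction k with
  | zero => omega
  | succ n ih =>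
    intro _ j hj
    rcases Nat.eq_zero_or_pos n with h0 | hn
    · subst h0
      simp only [Finset.mem_Icc] at hj
      have : j = 1 := by omega
      subst this
      constructor
      · show R ≤ Rseq c N R 1
        rw [Rseq]; linarith
      · exact le_refl _
    · have hgood := ih hn
      have hstep : Rseq c N R n ≤ Rseq c N R (n+1) := by
        have hb := (Rsucc_bounds c N R hN hR hOB n hn hgood).1
        have hM := Mval_ge c N R hN hR n hn hgood
        have hRn := (hgood n (by simp only [Finset.mem_Icc]; omega)).1
        linarith
      simp only [Finset.mem_Icc] at hj
      rcases Nat.lt_or_ge j (n+1) with hlt | hge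
      · have hj' : j ∈ Finset.Icc 1 n := by simp only [Finset.mem_Icc]; omega
        obtain ⟨h1, h2⟩ := hgood j hj'
        exact ⟨h1, h2.trans hstep⟩
      · have : j = n + 1 := by omega
        subst this
        refine ⟨?_, le_refl _⟩
        have := (hgood n (by simp only [Finset.mem_Icc]; omega)).1
        linarith

lemma Mval_eq (c : ℂ) (N : ℕ) (R : ℝ) (k : ℕ) (hk : 1 ≤ k)
    (hpos : ∀ j ∈ Finset.Icc 1 k, 0 < Rseq c N R j) :
    Mval c N R k = |Cseq c N R k| * 2 ^ (2 * nseq N k) := by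
  set Rk := Rseq c N R k with hRkdef
  have hRkpos : 0 < Rk := hpos k (by simp [hk])
  set P' := ∏ j ∈ Finset.Icc 1 (k-1), Rseq c N R j ^ nseq N j with hP'
  have hP'pos : 0 < P' := Finset.prod_pos (fun j hj => pow_pos (hpos j (by
    simp only [Finset.mem_Icc] at hj ⊢; omega)) _)
  have hPk : ∏ j ∈ Finset.Icc 1 k, Rseq c N R j ^ nseq N j = P' * Rk ^ nseq N k := by
    conv_lhs => rw [show k = (k-1)+1 by omega]
    rw [Finset.prod_Icc_succ_top (by omega), show k-1+1 = k by omega]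
  have hC : |Cseq c N R k| = Rk ^ nseq N k / (2^k * P') := by
    have h1 : |((-1:ℝ)) ^ (k-1)| = 1 := by
      rw [_root_.abs_pow, _root_.abs_neg, abs_one, one_pow]
    rw [Cseq, abs_div, abs_mul, h1, one_mul,
      abs_of_pos (pow_pos hRkpos _), abs_of_pos (by positivity)]
  have hprodeq : ∏ j ∈ Finset.Icc 1 k, ((1/2) * (2 * Rk / Rseq c N R j) ^ nseq N j)
      = (1/2:ℝ)^k * ((2*Rk) ^ (∑ j ∈ Finset.Icc 1 k, nseq N j) /
          ∏ j ∈ Finset.Icc 1 k, Rseq c N R j ^ nseq N j) := by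
    rw [Finset.prod_mul_distrib, Finset.prod_const, Nat.card_Icc]
    rw [Nat.add_sub_cancel]
    congr 1
    · simp only [div_pow]
      rw [Finset.prod_div_distrib, Finset.prod_pow_eq_pow_sum]
  have hSe : 2^N + ∑ j ∈ Finset.Icc 1 k, nseq N j = 2 * nseq N k := by
    rw [sum_nseq N k hk, nseq]
    conv_lhs => rw [show N + k = (N+k-1)+1 by omega]
    rw [pow_succ]
    ring
  have hmain : ((2*Rk):ℝ)^(2^N) * (2*Rk)^(∑ j ∈ Finset.Icc 1 k, nseq N j)
      = (2*Rk)^(2*nseq N k) := by rw [← pow_add, hSe]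
  have ht : ((2*Rk):ℝ)^(2*nseq N k)
      = 2^(2*nseq N k) * (Rk^(nseq N k) * Rk^(nseq N k)) := by
    rw [mul_pow, two_mul, pow_add]
    ring
  rw [Mval, hprodeq, hPk, hC]
  rw [← hRkdef]
  have hne1 : (P' : ℝ) ≠ 0 := ne_of_gt hP'pos
  have hne2 : Rk ^ nseq N k ≠ 0 := ne_of_gt (pow_pos hRkpos _)
  calc (2*Rk)^(2^N) * ((1/2:ℝ)^k * ((2*Rk) ^ (∑ j ∈ Finset.Icc 1 k, nseq N j) /
          (P' * Rk ^ nseq N k)))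
      = ((2*Rk)^(2^N) * (2*Rk) ^ (∑ j ∈ Finset.Icc 1 k, nseq N j)) *
          ((1/2:ℝ)^k / (P' * Rk ^ nseq N k)) := by ring
    _ = (2:ℝ)^(2*nseq N k) * (Rk^(nseq N k) * Rk^(nseq N k)) *
          ((1/2:ℝ)^k / (P' * Rk ^ nseq N k)) := by rw [hmain, ht]
    _ = Rk ^ nseq N k / (2 ^ k * P') * 2 ^ (2 * nseq N k) := by
        rw [div_pow, one_pow]
        field_simp

/-- There is `R₀ > 0` (depending only on `c`, `N`) such that for `R ≥ R₀` and every
`k ≥ 1`: `1/8 ≤ R_{k+1}/(|C_k| · 2^{2n_k}) ≤ 8`. -/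
theorem stmt14 (c : ℂ) (N : ℕ) (hN : 10 ≤ N) :
    ∃ R₀ : ℝ, 0 < R₀ ∧
      ∀ R : ℝ, R₀ ≤ R → OneBound c N R →
        ∀ k : ℕ, 1 ≤ k →
          1 / 8 ≤ Rseq c N R (k + 1) / (|Cseq c N R k| * 2 ^ (2 * nseq N k)) ∧
          Rseq c N R (k + 1) / (|Cseq c N R k| * 2 ^ (2 * nseq N k)) ≤ 8 := by
  refine ⟨1, one_pos, ?_⟩
  intro R hR hOB k hk
  have hgood := good_seq c N R hN hR hOB k hk
  have hpos : ∀ j ∈ Finset.Icc 1 k, 0 < Rseq c N R j := fun j hj => by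
    have := (hgood j hj).1; linarith
  obtain ⟨hb1, hb2⟩ := Rsucc_bounds c N R hN hR hOB k hk hgood
  have hMeq := Mval_eq c N R k hk hpos
  have hMpos : 0 < Mval c N R k := by
    have h16 := Mval_ge c N R hN hR k hk hgood
    have := (hgood k (by simp [hk])).1
    nlinarith
  have hDpos : 0 < |Cseq c N R k| * 2 ^ (2 * nseq N k) := hMeq ▸ hMpos
  rw [hMeq] at hb1 hb2
  constructor
  · rw [le_div_iff₀ hDpos]; linarith
  · rw [div_le_iff₀ hDpos]; linarith

end
end
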